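/- Let f : [0,∞) → ℝ be continuous, let τ := inf{t ≥ 0 : f(t) ≥ 1} (with inf ∅ = ∞), and assume 6 ≤ τ < ∞. Then: f,t ⊭ φ₁ for all t ∈ [0, τ−5); f,t ⊨ φ₁ at t = τ−5; and f,t ⊭ φ₁ for all t ∈ (τ−5, τ−3). In particular, τ−5 is an isolated point of the set {t ≥ 0 : f,t ⊨ φ₁}. -/

import Mathlib

open scoped NNReal ENNReal Topology

/-- `◇_I φ` at time `t`: there is `s ∈ I` with `φ` at `t+s`. -/
def Dia (I : Set ℝ≥0) (φ : ℝ≥0 → Prop) (t : ℝ≥0) : Prop := ∃ s ∈ I, φ (t + s)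

/-- `□_I φ` at time `t`: for all `s ∈ I`, `φ` at `t+s`. -/
def Box (I : Set ℝ≥0) (φ : ℝ≥0 → Prop) (t : ℝ≥0) : Prop := ∀ s ∈ I, φ (t + s)

/-- The atomic proposition `p`: `f(t) ≥ 1`. -/
def SatP (f : ℝ≥0 → ℝ) (t : ℝ≥0) : Prop := 1 ≤ f t

/-- `φ₁ := □_{(1,2)}(◇_{(1,4)}p ∧ ¬◇_{(1,3)}p)`. -/
def Phi1 (f : ℝ≥0 → ℝ) : ℝ≥0 → Prop :=
  Box (Set.Ioo 1 2) fun u => Dia (Set.Ioo 1 4) (SatP f) u ∧ ¬ Dia (Set.Ioo 1 3) (SatP f) u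

/-- for continuous `f : [0,∞) → ℝ` with `τ = inf{t : f(t) ≥ 1}` satisfying
`6 ≤ τ < ∞` (the existence of the finite infimum is expressed by `IsGLB`), the formula `φ₁`
fails on `[0,τ−5)`, holds at `τ−5`, fails on `(τ−5,τ−3)`; in particular `τ−5` is an isolated
point of `{t : f,t ⊨ φ₁}`. -/
theorem stmt_5 (f : ℝ≥0 → ℝ) (hf : Continuous f) (τ : ℝ≥0)
    (hτ : IsGLB {t : ℝ≥0 | 1 ≤ f t} τ) (h6 : 6 ≤ τ) :
    (∀ t, t < τ - 5 → ¬ Phi1 f t) ∧ Phi1 f (τ - 5) ∧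
      (∀ t, τ - 5 < t → t < τ - 3 → ¬ Phi1 f t) ∧
      𝓝[{t | Phi1 f t} \ {τ - 5}] (τ - 5) = ⊥ := by
  have hclosed : IsClosed {t : ℝ≥0 | 1 ≤ f t} := isClosed_le continuous_const hf
  have hne : {t : ℝ≥0 | 1 ≤ f t}.Nonempty := by
    by_contra h
    rw [Set.not_nonempty_iff_eq_empty] at h
    have : τ + 1 ≤ τ :=
      hτ.2 (fun y hy => by rw [h] at hy; exact absurd hy (Set.notMem_empty y))
    simpa using this
  have hfτ : 1 ≤ f τ := hτ.mem_of_isClosed hne hclosed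
  have hlt : ∀ s, s < τ → f s < 1 := fun s hs =>
    lt_of_not_ge fun h => (hτ.1 h).not_gt hs
  have h5 : (5 : ℝ≥0) ≤ τ := le_trans (by norm_num) h6
  have hτ5 : (τ - 5) + 5 = τ := tsub_add_cancel_of_le h5
  have part1 : ∀ t, t < τ - 5 → ¬ Phi1 f t := by
    intro t ht hP
    rw [lt_tsub_iff_right] at ht
    set ε := τ - (t + 5) with hε
    have hεpos : 0 < ε := tsub_pos_of_lt ht
    set u := 1 + min (1/2) (ε/2) with hu
    have hu1 : (1 : ℝ≥0) < u := by
      have : (0:ℝ≥0) < min (1/2) (ε/2) := lt_min (by norm_num) (by positivity)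
      simpa [hu] using this
    have hu2 : u < 2 := by
      have h1 : min (1/2 : ℝ≥0) (ε/2) ≤ 1/2 := min_le_left _ _
      calc u ≤ 1 + 1/2 := add_le_add_right h1 1
        _ < 2 := by rw [← NNReal.coe_lt_coe]; push_cast; norm_num
    have hbound : t + u + 4 < τ := by
      have h1 : min (1/2:ℝ≥0) (ε/2) ≤ ε/2 := min_le_right _ _
      have h2 : ε/2 < ε := NNReal.half_lt_self hεpos.ne'
      have h3 : t + u + 4 = (t+5) + min (1/2:ℝ≥0) (ε/2) := by
        rw [hu]; ring
      rw [h3]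
      calc (t+5) + min (1/2:ℝ≥0) (ε/2) ≤ (t+5) + ε/2 := add_le_add_right h1 _
        _ < (t+5) + ε := add_lt_add_right h2 _
        _ = τ := add_tsub_cancel_of_le ht.le
    obtain ⟨⟨s, ⟨hs1, hs4⟩, hp⟩, -⟩ := hP u ⟨hu1, hu2⟩
    have hsτ : t + u + s < τ := lt_trans (add_lt_add_right hs4 _) hbound
    exact absurd hp (not_le.2 (hlt _ hsτ))
  have part2 : Phi1 f (τ - 5) := by
    rintro u ⟨hu1, hu2⟩
    have htu : (τ-5) + u ≤ τ := by
      calc (τ-5)+u ≤ (τ-5)+2 := add_le_add_right hu2.le _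
        _ ≤ (τ-5)+5 := by gcongr <;> norm_num
        _ = τ := hτ5
    constructor
    · refine ⟨τ - ((τ-5)+u), ⟨?_, ?_⟩, ?_⟩
      · rw [lt_tsub_iff_left]
        calc (τ-5)+u+1 < (τ-5)+2+1 := by gcongr
          _ ≤ (τ-5)+5 := by rw [add_assoc]; gcongr; norm_num
          _ = τ := hτ5
      · rw [tsub_lt_iff_left htu]
        calc τ = (τ-5)+5 := hτ5.symm
          _ = 4 + ((τ-5)+1) := by ring
          _ < 4 + ((τ-5)+u) := by gcongr
          _ = (τ-5)+u+4 := by ring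
      · rw [add_tsub_cancel_of_le htu]
        exact hfτ
    · rintro ⟨s, ⟨hs1, hs3⟩, hp⟩
      have hττ : τ ≤ (τ-5)+u+s := hτ.1 hp
      have : (τ-5)+u+s < τ := by
        calc (τ-5)+u+s < (τ-5)+2+3 := by rw [add_assoc, add_assoc]; gcongr
          _ = (τ-5)+5 := by ring
          _ = τ := hτ5
      exact absurd hττ (not_le.2 this)
  have part3 : ∀ t, τ-5 < t → t < τ-3 → ¬ Phi1 f t := by
    intro t h1 h2 hP
    have ht3 : t + 3 < τ := lt_tsub_iff_right.mp h2
    have htτ : t ≤ τ := le_trans (le_add_right le_rfl) ht3.le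
    set d := τ - t with hd
    have hd3 : (3:ℝ≥0) < d := lt_tsub_iff_left.mpr ht3
    have hd5 : d < 5 := by
      rw [hd, tsub_lt_iff_left htτ]
      exact (tsub_lt_iff_right h5).mp h1
    have hd1 : (1:ℝ≥0) ≤ d := le_trans (by norm_num) hd3.le
    set u := (d - 1)/2 with hu
    have hdu : (d - 1) + (d + 1) = d + d := by
      rw [add_comm d 1, ← add_assoc, tsub_add_cancel_of_le hd1]
    have hu1 : (1:ℝ≥0) < u := by
      rw [hu, lt_div_iff₀ (by norm_num : (0:ℝ≥0) < 2), lt_tsub_iff_right]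
      calc (1:ℝ≥0) * 2 + 1 = 3 := by norm_num
        _ < d := hd3
    have hu2 : u < 2 := by
      rw [hu, div_lt_iff₀ (by norm_num : (0:ℝ≥0) < 2), tsub_lt_iff_right hd1]
      calc d < 5 := hd5
        _ = 2 * 2 + 1 := by norm_num
    set s := (d + 1)/2 with hs
    have hus : u + s = d := by
      rw [hu, hs, ← add_div, hdu, ← two_mul,
        mul_div_cancel_left₀ d (by norm_num : (2:ℝ≥0) ≠ 0)]
    have hs1 : (1:ℝ≥0) < s := by
      rw [hs, lt_div_iff₀ (by norm_num : (0:ℝ≥0) < 2)]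
      calc (1:ℝ≥0) * 2 = 2 := by norm_num
        _ < 3 + 1 := by norm_num
        _ ≤ d + 1 := add_le_add_left hd3.le 1
    have hs3 : s < 3 := by
      rw [hs, div_lt_iff₀ (by norm_num : (0:ℝ≥0) < 2)]
      calc d + 1 < 5 + 1 := by gcongr
        _ = 3 * 2 := by norm_num
    obtain ⟨-, hnot⟩ := hP u ⟨hu1, hu2⟩
    refine hnot ⟨s, ⟨hs1, hs3⟩, ?_⟩
    have : t + u + s = τ := by
      rw [add_assoc, hus, hd, add_tsub_cancel_of_le htτ]
    rw [this]
    exact hfτ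
  refine ⟨part1, part2, part3, ?_⟩
  rw [← Filter.empty_mem_iff_bot, mem_nhdsWithin]
  refine ⟨Set.Iio (τ - 3), isOpen_Iio, ?_, ?_⟩
  · rw [Set.mem_Iio, lt_tsub_iff_right]
    calc (τ-5)+3 < (τ-5)+5 := by gcongr <;> norm_num
      _ = τ := hτ5
  · rintro x ⟨hx, hxP, hxne⟩
    rcases lt_trichotomy x (τ-5) with h | h | h
    · exact part1 x h hxP
    · exact hxne h
    · exact part3 x h hx hxP
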